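/- Let t ≥ 1 and s > 3 be integers and n = 3st. Let H_{s,t} be the graph on n vertices obtained by partitioning the vertex set into 3s classes V_{ij} (i ∈ {1,2,3}, j ∈ {1,...,s}), each of size t, and joining u ∈ V_{ij} to v ∈ V_{kl} if and only if i ≠ k and j ≠ l. Then H_{s,t} has exactly 3s(s−1)t² = (s−1)n²/(3s) edges and bk(H_{s,t}) = (s−2)t = (s−2)n/(3s). -/

import Mathlib

open Finset
open scoped Classical

/-- The booksize of `G`: the maximum over edges `uv` of `G` of the number of
common neighbors of `u` and `v` (`0` if `G` has no edges). -/
noncomputable def bk {V : Type*} [Fintype V] (G : SimpleGraph V) : ℕ :=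
  (Finset.univ.filter fun p : V × V => G.Adj p.1 p.2).sup
    fun p => (G.neighborSet p.1 ∩ G.neighborSet p.2).ncard

/-- The number of `s`-cliques of `G`. -/
noncomputable def cliqueCount {V : Type*} [Fintype V] (G : SimpleGraph V) (s : ℕ) : ℕ :=
  (G.cliqueFinset s).card

/-- The number of induced subgraphs of `G` isomorphic to `H`. -/
noncomputable def inducedCopies {V W : Type*} [Fintype V] (G : SimpleGraph V)
    (H : SimpleGraph W) : ℕ :=
  {s : Set V | Nonempty (G.induce s ≃g H)}.ncard

/-- `K4j j` is the graph `K₄^(j)`: a triangle on `{0,1,2}` together with the vertex `3`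
joined to precisely `3 - j` of its vertices. -/
def K4j (j : ℕ) : SimpleGraph (Fin 4) :=
  SimpleGraph.fromRel fun a b => (a.val < 3 ∧ b.val < 3) ∨ (a.val = 3 ∧ b.val < 3 - j)

/-- The codegree function `d̂`, as a function on unordered pairs. -/
noncomputable def codegSym {V : Type*} [Fintype V] (G : SimpleGraph V) : Sym2 V → ℕ :=
  Sym2.lift ⟨fun u v => (G.neighborSet u ∩ G.neighborSet v).ncard,
    fun u v => by simp [Set.inter_comm]⟩

/-- `|Γ'(u) ∩ Γ'(v)|`, where `Γ'(x) = V ∖ Γ(x)`, as a function on unordered pairs. -/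
noncomputable def noncodegSym {V : Type*} [Fintype V] (G : SimpleGraph V) : Sym2 V → ℕ :=
  Sym2.lift ⟨fun u v => ((G.neighborSet u)ᶜ ∩ (G.neighborSet v)ᶜ).ncard,
    fun u v => by simp [Set.inter_comm]⟩

/-- The Erdős–Faudree–Rousseau graph `H_{s,t}`: vertices are triples `(i, j, a)` with
`i ∈ [3]`, `j ∈ [s]`, `a ∈ [t]` (so the class `V_{ij}` is `{i} × {j} × [t]`), and
`(i, j, a)` is joined to `(k, l, b)` iff `i ≠ k` and `j ≠ l`. -/
def Hst (s t : ℕ) : SimpleGraph (Fin 3 × Fin s × Fin t) where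
  Adj u v := u.1 ≠ v.1 ∧ u.2.1 ≠ v.2.1
  symm := ⟨fun u v h => ⟨h.1.symm, h.2.symm⟩⟩
  loopless := ⟨fun u h => h.1 rfl⟩

lemma card_filter_ne_one {α : Type*} [Fintype α] [DecidableEq α] (i : α) :
    (univ.filter fun x => x ≠ i).card = Fintype.card α - 1 := by
  rw [Finset.filter_ne' univ i, Finset.card_erase_of_mem (mem_univ i), Finset.card_univ]

lemma card_filter_ne_two {α : Type*} [Fintype α] [DecidableEq α] {i k : α} (h : i ≠ k) :
    (univ.filter fun x => x ≠ i ∧ x ≠ k).card = Fintype.card α - 2 := by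
  have he : (univ.filter fun x => x ≠ i ∧ x ≠ k) = (univ.erase i).erase k := by
    ext x; simp [and_comm]
  rw [he, Finset.card_erase_of_mem, Finset.card_erase_of_mem (mem_univ i),
    Finset.card_univ]
  · omega
  · exact Finset.mem_erase.2 ⟨h.symm, mem_univ k⟩

lemma card_filter_prod3 {α β γ : Type*} [Fintype α] [Fintype β] [Fintype γ]
    (p : α → Prop) (q : β → Prop) [DecidablePred p] [DecidablePred q] :
    (univ.filter fun w : α × β × γ => p w.1 ∧ q w.2.1).card
      = (univ.filter p).card * ((univ.filter q).card * Fintype.card γ) := by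
  classical
  have h1 : (univ.filter fun w : α × β × γ => p w.1 ∧ q w.2.1)
      = (univ.filter p) ×ˢ ((univ.filter q) ×ˢ univ) := by
    ext ⟨a, b, c⟩; simp
  rw [h1, Finset.card_product, Finset.card_product, Finset.card_univ]

lemma Hst_degree (s t : ℕ) (v : Fin 3 × Fin s × Fin t) :
    (Hst s t).degree v = 2 * ((s - 1) * t) := by
  classical
  have h : (Hst s t).neighborFinset v
      = univ.filter (fun w : Fin 3 × Fin s × Fin t => w.1 ≠ v.1 ∧ w.2.1 ≠ v.2.1) := by
    ext w
    simp only [SimpleGraph.mem_neighborFinset, Finset.mem_filter, Finset.mem_univ, true_and]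
    constructor
    · rintro ⟨h1, h2⟩; exact ⟨h1.symm, h2.symm⟩
    · rintro ⟨h1, h2⟩; exact ⟨h1.symm, h2.symm⟩
  rw [← SimpleGraph.card_neighborFinset_eq_degree, h,
    card_filter_prod3 (fun x : Fin 3 => x ≠ v.1) (fun x : Fin s => x ≠ v.2.1),
    card_filter_ne_one, card_filter_ne_one]
  simp

lemma Hst_codeg (s t : ℕ) {u v : Fin 3 × Fin s × Fin t} (h1 : u.1 ≠ v.1)
    (h2 : u.2.1 ≠ v.2.1) :
    ((Hst s t).neighborSet u ∩ (Hst s t).neighborSet v).ncard = (s - 2) * t := by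
  classical
  have h : ((Hst s t).neighborSet u ∩ (Hst s t).neighborSet v)
      = ↑(univ.filter fun w : Fin 3 × Fin s × Fin t =>
          (w.1 ≠ u.1 ∧ w.1 ≠ v.1) ∧ (w.2.1 ≠ u.2.1 ∧ w.2.1 ≠ v.2.1)) := by
    ext w
    simp only [Set.mem_inter_iff, SimpleGraph.mem_neighborSet, Finset.coe_filter,
      Set.mem_setOf_eq, Finset.mem_univ, true_and]
    show ((u.1 ≠ w.1 ∧ u.2.1 ≠ w.2.1) ∧ (v.1 ≠ w.1 ∧ v.2.1 ≠ w.2.1)) ↔ _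
    constructor
    · rintro ⟨⟨a, b⟩, c, d⟩; exact ⟨⟨a.symm, c.symm⟩, b.symm, d.symm⟩
    · rintro ⟨⟨a, b⟩, c, d⟩; exact ⟨⟨a.symm, c.symm⟩, b.symm, d.symm⟩
  rw [h, Set.ncard_coe_finset,
    card_filter_prod3 (fun x : Fin 3 => x ≠ u.1 ∧ x ≠ v.1)
      (fun x : Fin s => x ≠ u.2.1 ∧ x ≠ v.2.1),
    card_filter_ne_two h1, card_filter_ne_two h2]
  simp

theorem stmt9 (s t n : ℕ) (ht : 1 ≤ t) (hs : 3 < s) (hn : n = 3 * s * t) :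
    (Hst s t).edgeFinset.card = 3 * s * (s - 1) * t ^ 2 ∧
    3 * s * (3 * s * (s - 1) * t ^ 2) = (s - 1) * n ^ 2 ∧
    bk (Hst s t) = (s - 2) * t ∧
    3 * s * ((s - 2) * t) = (s - 2) * n := by
  classical
  subst hn
  obtain ⟨a, ha⟩ : ∃ a, s - 1 = a := ⟨_, rfl⟩
  obtain ⟨b, hb⟩ : ∃ b, s - 2 = b := ⟨_, rfl⟩
  refine ⟨?_, by rw [ha]; ring, ?_, by rw [hb]; ring⟩
  · -- edge count
    have hsum := (Hst s t).sum_degrees_eq_twice_card_edges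
    simp only [Hst_degree, Finset.sum_const, smul_eq_mul, Finset.card_univ,
      Fintype.card_prod, Fintype.card_fin] at hsum
    apply Nat.eq_of_mul_eq_mul_left (show 0 < 2 by norm_num)
    rw [← hsum, ha]; ring
  · -- booksize
    unfold bk
    have hmem : ((⟨0, ⟨0, by omega⟩, ⟨0, by omega⟩⟩ : Fin 3 × Fin s × Fin t),
        (⟨1, ⟨1, by omega⟩, ⟨0, by omega⟩⟩ : Fin 3 × Fin s × Fin t)) ∈
        (Finset.univ.filter fun p : (Fin 3 × Fin s × Fin t) × (Fin 3 × Fin s × Fin t) =>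
          (Hst s t).Adj p.1 p.2) := by
      refine Finset.mem_filter.2 ⟨Finset.mem_univ _, ?_, ?_⟩
      · simp
      · simp [Fin.ext_iff]
    rw [Finset.sup_congr rfl (fun p hp => ?_)]
    · exact Finset.sup_const ⟨_, hmem⟩ _
    · have hadj : (Hst s t).Adj p.1 p.2 := (Finset.mem_filter.1 hp).2
      exact Hst_codeg s t hadj.1 hadj.2
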